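/- arXiv:1610.09579 — 5 statements merged into one kernel-verified Lean document; each statement's English description precedes it below -/
import Mathlib

section
/- Let ε with 0 ≤ ε < π/12. In an ε-near-square quadrilateral, if one edge has length 1, then the length of any adjacent edge lies strictly between tan(π/4 − ε)·cos(2ε) and tan(π/4 + ε)/cos(2ε). -/
open Real EuclideanGeometry

/-- Four points of a convex quadrilateral: each vertex is outside the
convex hull of the other three. -/
def ConvexPosition (A B C D : EuclideanSpace ℝ (Fin 2)) : Prop :=
  A ∉ convexHull ℝ ({B, C, D} : Set (EuclideanSpace ℝ (Fin 2))) ∧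
  B ∉ convexHull ℝ ({A, C, D} : Set (EuclideanSpace ℝ (Fin 2))) ∧
  C ∉ convexHull ℝ ({A, B, D} : Set (EuclideanSpace ℝ (Fin 2))) ∧
  D ∉ convexHull ℝ ({A, B, C} : Set (EuclideanSpace ℝ (Fin 2)))

/-- A convex quadrilateral `ABCD` is `ε`-near-square if the four angles cut
off by the diagonal `AC` are all within `ε` of `π/4`. -/
def NearSquare (ε : ℝ) (A B C D : EuclideanSpace ℝ (Fin 2)) : Prop :=
  ConvexPosition A B C D ∧
  |∠ B A C - π / 4| < ε ∧ |∠ B C A - π / 4| < ε ∧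
  |∠ D A C - π / 4| < ε ∧ |∠ D C A - π / 4| < ε

section helpers

variable {V : Type*} [NormedAddCommGroup V] [InnerProductSpace ℝ V]

lemma lawsinV {x y : V} (hy : y ≠ 0) :
    Real.sin (InnerProductGeometry.angle x y) * ‖x‖
      = Real.sin (InnerProductGeometry.angle (x - y) (-y)) * ‖x - y‖ := by
  have h1 := InnerProductGeometry.sin_angle_mul_norm_mul_norm x y
  have h2 := InnerProductGeometry.sin_angle_mul_norm_mul_norm (x - y) (-y)
  have hq : (inner ℝ (x-y) (x-y) : ℝ) * inner ℝ (-y) (-y) - inner ℝ (x-y) (-y) * inner ℝ (x-y) (-y)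
      = (inner ℝ x x : ℝ) * inner ℝ y y - inner ℝ x y * inner ℝ x y := by
    simp only [inner_sub_left, inner_sub_right, inner_neg_left, inner_neg_right,
      real_inner_comm x y]
    ring
  rw [hq, norm_neg] at h2
  have hyn : (‖y‖ : ℝ) ≠ 0 := norm_ne_zero_iff.2 hy
  apply mul_right_cancel₀ hyn
  rw [mul_assoc, mul_assoc, h1, h2]

lemma lawsinP (P Q R : EuclideanSpace ℝ (Fin 2)) (h : R ≠ Q) :
    Real.sin (∠ P Q R) * dist Q P = Real.sin (∠ P R Q) * dist R P := by
  have hy : (R -ᵥ Q : EuclideanSpace ℝ (Fin 2)) ≠ 0 := vsub_ne_zero.2 h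
  have := lawsinV (x := P -ᵥ Q) hy
  rw [vsub_sub_vsub_cancel_right, neg_vsub_eq_vsub_rev] at this
  simpa [EuclideanGeometry.angle, dist_eq_norm_vsub (EuclideanSpace ℝ (Fin 2)),
    dist_comm Q P, dist_comm R P, norm_sub_rev P] using this

lemma sin_lt_sin' {u v : ℝ} (hu : -(π/2) ≤ u) (hv : v ≤ π/2) (h : u < v) :
    Real.sin u < Real.sin v :=
  Real.strictMonoOn_sin ⟨hu, h.le.trans hv⟩ ⟨hu.trans h.le, hv⟩ h

lemma cos_lt_sin_of {ε x : ℝ} (hε' : ε < π/12) (h1 : π/2 - 2*ε < x)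
    (h2 : x < π/2 + 2*ε) : Real.cos (2*ε) < Real.sin x := by
  have hπ := Real.pi_pos
  have hc : Real.cos (2*ε) = Real.sin (π/2 - 2*ε) := by
    rw [Real.sin_pi_div_two_sub]
  rw [hc]
  rcases le_or_gt x (π/2) with h | h
  · exact sin_lt_sin' (by linarith) h h1
  · rw [← Real.sin_pi_sub x]
    exact sin_lt_sin' (by linarith) (by linarith) (by linarith)

lemma div_lt_div4 {a b c d : ℝ} (ha : 0 < a) (hd : 0 < d) (h1 : a < c) (h2 : d < b) :
    a / b < c / d := by
  rw [div_lt_div_iff₀ (hd.trans h2) hd]; nlinarith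

end helpers

set_option maxHeartbeats 1000000 in
lemma realpart (ε a1 a2 a3 a4 : ℝ) (hε : ε < π / 12) (hepos : 0 < ε)
    (b1 : |a1 - π / 4| < ε) (b2 : |a2 - π / 4| < ε)
    (b3 : |a3 - π / 4| < ε) (b4 : |a4 - π / 4| < ε) :
    (Real.tan (π / 4 - ε) * Real.cos (2 * ε) < Real.sin a1 / Real.sin a2 ∧
      Real.sin a1 / Real.sin a2 < Real.tan (π / 4 + ε) / Real.cos (2 * ε)) ∧
    (Real.tan (π / 4 - ε) * Real.cos (2 * ε)
        < (Real.sin (a1 + a2) * Real.sin a4) / (Real.sin a2 * Real.sin (a3 + a4)) ∧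
      (Real.sin (a1 + a2) * Real.sin a4) / (Real.sin a2 * Real.sin (a3 + a4))
        < Real.tan (π / 4 + ε) / Real.cos (2 * ε)) := by
  have hπ := Real.pi_pos
  obtain ⟨l1, u1⟩ := abs_lt.1 b1
  obtain ⟨l2, u2⟩ := abs_lt.1 b2
  obtain ⟨l3, u3⟩ := abs_lt.1 b3
  obtain ⟨l4, u4⟩ := abs_lt.1 b4
  have hs1p : 0 < Real.sin a1 := Real.sin_pos_of_pos_of_lt_pi (by linarith) (by linarith)
  have hs2p : 0 < Real.sin a2 := Real.sin_pos_of_pos_of_lt_pi (by linarith) (by linarith)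
  have hs4p : 0 < Real.sin a4 := Real.sin_pos_of_pos_of_lt_pi (by linarith) (by linarith)
  have hS1p : 0 < Real.sin (a1 + a2) :=
    Real.sin_pos_of_pos_of_lt_pi (by linarith) (by linarith)
  have hS2p : 0 < Real.sin (a3 + a4) :=
    Real.sin_pos_of_pos_of_lt_pi (by linarith) (by linarith)
  have hid1 : Real.sin (π/4 + ε) = Real.cos (π/4 - ε) := by
    rw [← Real.sin_pi_div_two_sub]; congr 1; ring
  have hid2 : Real.cos (π/4 + ε) = Real.sin (π/4 - ε) := by
    rw [← Real.sin_pi_div_two_sub]; congr 1; ring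
  have hsL : 0 < Real.sin (π/4 - ε) :=
    Real.sin_pos_of_pos_of_lt_pi (by linarith) (by linarith)
  have hsU : 0 < Real.sin (π/4 + ε) :=
    Real.sin_pos_of_pos_of_lt_pi (by linarith) (by linarith)
  have htL : Real.tan (π/4 - ε) = Real.sin (π/4 - ε) / Real.sin (π/4 + ε) := by
    rw [Real.tan_eq_sin_div_cos, hid1]
  have htU : Real.tan (π/4 + ε) = Real.sin (π/4 + ε) / Real.sin (π/4 - ε) := by
    rw [Real.tan_eq_sin_div_cos, hid2]
  have htLp : 0 < Real.tan (π/4 - ε) := by rw [htL]; positivity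
  have htUp : 0 < Real.tan (π/4 + ε) := by rw [htU]; positivity
  have hcp : 0 < Real.cos (2 * ε) :=
    Real.cos_pos_of_mem_Ioo ⟨by linarith, by linarith⟩
  have hc1 : Real.cos (2 * ε) < 1 := by
    have := Real.strictAntiOn_cos ⟨le_refl (0:ℝ), hπ.le⟩
      ⟨by linarith, by linarith⟩ (by linarith : (0:ℝ) < 2 * ε)
    rwa [Real.cos_zero] at this
  have cmp1L : Real.sin (π/4 - ε) < Real.sin a1 :=
    sin_lt_sin' (by linarith) (by linarith) (by linarith)
  have cmp1U : Real.sin a1 < Real.sin (π/4 + ε) :=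
    sin_lt_sin' (by linarith) (by linarith) (by linarith)
  have cmp2L : Real.sin (π/4 - ε) < Real.sin a2 :=
    sin_lt_sin' (by linarith) (by linarith) (by linarith)
  have cmp2U : Real.sin a2 < Real.sin (π/4 + ε) :=
    sin_lt_sin' (by linarith) (by linarith) (by linarith)
  have cmp4L : Real.sin (π/4 - ε) < Real.sin a4 :=
    sin_lt_sin' (by linarith) (by linarith) (by linarith)
  have cmp4U : Real.sin a4 < Real.sin (π/4 + ε) :=
    sin_lt_sin' (by linarith) (by linarith) (by linarith)
  have cmpS1 : Real.cos (2 * ε) < Real.sin (a1 + a2) :=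
    cos_lt_sin_of hε (by linarith) (by linarith)
  have cmpS2 : Real.cos (2 * ε) < Real.sin (a3 + a4) :=
    cos_lt_sin_of hε (by linarith) (by linarith)
  have hS1le := Real.sin_le_one (a1 + a2)
  have hS2le := Real.sin_le_one (a3 + a4)
  have hfac : (Real.sin (a1 + a2) * Real.sin a4) / (Real.sin a2 * Real.sin (a3 + a4))
      = (Real.sin (a1 + a2) / Real.sin (a3 + a4)) * (Real.sin a4 / Real.sin a2) := by
    field_simp
  have hq1L : Real.cos (2 * ε) < Real.sin (a1 + a2) / Real.sin (a3 + a4) := by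
    rw [lt_div_iff₀ hS2p]; nlinarith
  have hq1U : Real.sin (a1 + a2) / Real.sin (a3 + a4) < 1 / Real.cos (2 * ε) := by
    rw [div_lt_div_iff₀ hS2p hcp]; nlinarith
  have hq2L : Real.tan (π/4 - ε) < Real.sin a4 / Real.sin a2 := by
    rw [htL]; exact div_lt_div4 hsL hs2p cmp4L cmp2U
  have hq2U : Real.sin a4 / Real.sin a2 < Real.tan (π/4 + ε) := by
    rw [htU]; exact div_lt_div4 hs4p hsL cmp4U cmp2L
  refine ⟨⟨?_, ?_⟩, ?_, ?_⟩
  · calc Real.tan (π/4 - ε) * Real.cos (2 * ε) < Real.tan (π/4 - ε) := by nlinarith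
      _ = Real.sin (π/4 - ε) / Real.sin (π/4 + ε) := htL
      _ < Real.sin a1 / Real.sin a2 := div_lt_div4 hsL hs2p cmp1L cmp2U
  · calc Real.sin a1 / Real.sin a2
        < Real.sin (π/4 + ε) / Real.sin (π/4 - ε) := div_lt_div4 hs1p hsL cmp1U cmp2L
      _ = Real.tan (π/4 + ε) := htU.symm
      _ < Real.tan (π/4 + ε) / Real.cos (2 * ε) := by rw [lt_div_iff₀ hcp]; nlinarith
  · rw [hfac]
    calc Real.tan (π/4 - ε) * Real.cos (2 * ε)
        = Real.cos (2 * ε) * Real.tan (π/4 - ε) := by ring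
      _ < (Real.sin (a1 + a2) / Real.sin (a3 + a4)) * (Real.sin a4 / Real.sin a2) :=
          mul_lt_mul'' hq1L hq2L hcp.le htLp.le
  · rw [hfac]
    calc (Real.sin (a1 + a2) / Real.sin (a3 + a4)) * (Real.sin a4 / Real.sin a2)
        < (1 / Real.cos (2 * ε)) * Real.tan (π/4 + ε) :=
          mul_lt_mul'' hq1U hq2U (by positivity) (by positivity)
      _ = Real.tan (π/4 + ε) / Real.cos (2 * ε) := by ring

theorem stmt2 (ε : ℝ) (hε0 : 0 ≤ ε) (hε : ε < π / 12)
    (A B C D : EuclideanSpace ℝ (Fin 2))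
    (hns : NearSquare ε A B C D)
    (hAB : dist A B = 1) :
    (Real.tan (π / 4 - ε) * Real.cos (2 * ε) < dist B C ∧
      dist B C < Real.tan (π / 4 + ε) / Real.cos (2 * ε)) ∧
    (Real.tan (π / 4 - ε) * Real.cos (2 * ε) < dist A D ∧
      dist A D < Real.tan (π / 4 + ε) / Real.cos (2 * ε)) := by
  obtain ⟨-, h1, h2, h3, h4⟩ := hns
  have hπ := Real.pi_pos
  have hepos : 0 < ε := lt_of_le_of_lt (abs_nonneg _) h1
  obtain ⟨l1, u1⟩ := abs_lt.1 h1
  obtain ⟨l2, u2⟩ := abs_lt.1 h2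
  obtain ⟨l3, u3⟩ := abs_lt.1 h3
  obtain ⟨l4, u4⟩ := abs_lt.1 h4
  have hBA : B ≠ A := by
    rintro rfl; rw [EuclideanGeometry.angle_self_left] at u1; linarith
  have hCA : C ≠ A := by
    rintro rfl; rw [EuclideanGeometry.angle_self_right] at u1; linarith
  have hCB : C ≠ B := by
    rintro rfl; rw [EuclideanGeometry.angle_self_left] at u2; linarith
  have hDA : D ≠ A := by
    rintro rfl; rw [EuclideanGeometry.angle_self_left] at u3; linarith
  have hCD : C ≠ D := by
    rintro rfl; rw [EuclideanGeometry.angle_self_left] at u4; linarith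
  have hs2p : 0 < Real.sin (∠ B C A) :=
    Real.sin_pos_of_pos_of_lt_pi (by linarith) (by linarith)
  have hS2p : 0 < Real.sin (∠ D A C + ∠ D C A) :=
    Real.sin_pos_of_pos_of_lt_pi (by linarith) (by linarith)
  have s1 := EuclideanGeometry.angle_add_angle_add_angle_eq_pi (p₁ := B) C hBA.symm
  have s2 := EuclideanGeometry.angle_add_angle_add_angle_eq_pi (p₁ := A) C hDA
  rw [EuclideanGeometry.angle_comm A C B, EuclideanGeometry.angle_comm C B A] at s1
  rw [EuclideanGeometry.angle_comm C A D] at s2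
  have hABC : ∠ A B C = π - (∠ B A C + ∠ B C A) := by linarith
  have hADC : ∠ A D C = π - (∠ D A C + ∠ D C A) := by linarith
  have e1 := lawsinP B A C hCA
  have e2 := lawsinP A B C hCB
  have e3 := lawsinP A D C hCD
  rw [hAB] at e1
  rw [dist_comm B A, hAB, hABC, Real.sin_pi_sub, EuclideanGeometry.angle_comm A C B] at e2
  rw [hADC, Real.sin_pi_sub, EuclideanGeometry.angle_comm A C D] at e3
  have hBCval : dist B C = Real.sin (∠ B A C) / Real.sin (∠ B C A) := by
    rw [dist_comm, eq_div_iff hs2p.ne']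
    linear_combination -e1
  have hADval : dist A D
      = (Real.sin (∠ B A C + ∠ B C A) * Real.sin (∠ D C A))
        / (Real.sin (∠ B C A) * Real.sin (∠ D A C + ∠ D C A)) := by
    rw [dist_comm, eq_div_iff (mul_pos hs2p hS2p).ne']
    linear_combination Real.sin (∠ B C A) * e3 - Real.sin (∠ D C A) * e2
  rw [hBCval, hADval]
  exact realpart ε (∠ B A C) (∠ B C A) (∠ D A C) (∠ D C A) hε hepos h1 h2 h3 h4
end

section
/- Let b₁, b₃, a₆, a₈, b₁' be five points in the plane such that the four segments b₁b₃, b₃a₆, a₆a₈, a₈b₁' all have the same length r > 0, with (interior) angles ∠b₁b₃a₆ = ∠a₆a₈b₁' = 2α and ∠b₃a₆a₈ = 2θ (turning consistently, forming a planar polygonal chain). Fix coordinates so that b₁ = (0,0) and b₁' lies on the positive x-axis. If π/4 < α < π/2 and π/4 < θ < π/2, then the y-coordinates satisfy y(a₆) > y(b₁), y(a₈) > y(b₃), y(a₆) > y(b₃), and y(a₈) > y(b₁). Moreover the angular slopes of the successive segments b₁b₃, b₃a₆, a₆a₈, a₈b₁' are α − θ, π − α − θ, θ − α, α + θ − π respectively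 (measured as angles with the x-axis). -/
open Real Complex

lemma key_exp (x a t : ℂ) :
    Complex.exp (x * I) + Complex.exp ((x + ↑π - 2 * a) * I) +
      Complex.exp ((x + 2 * t - 2 * a) * I) + Complex.exp ((x + 2 * t - ↑π) * I) =
    4 * Complex.sin a * Complex.sin t * Complex.exp ((x - a + t) * I) := by
  have e2 : Complex.exp ((x + ↑π - 2 * a) * I)
      = Complex.exp (x * I) * Complex.exp (↑π * I) * Complex.exp (-(a * I)) * Complex.exp (-(a * I)) := by
    rw [← Complex.exp_add, ← Complex.exp_add, ← Complex.exp_add]; congr 1; ring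
  have e3 : Complex.exp ((x + 2 * t - 2 * a) * I)
      = Complex.exp (x * I) * Complex.exp (t * I) * Complex.exp (t * I) *
        Complex.exp (-(a * I)) * Complex.exp (-(a * I)) := by
    rw [← Complex.exp_add, ← Complex.exp_add, ← Complex.exp_add, ← Complex.exp_add]; congr 1; ring
  have e4 : Complex.exp ((x + 2 * t - ↑π) * I)
      = Complex.exp (x * I) * Complex.exp (t * I) * Complex.exp (t * I) *
        (Complex.exp (↑π * I))⁻¹ := by
    rw [← Complex.exp_neg, ← Complex.exp_add, ← Complex.exp_add, ← Complex.exp_add]; congr 1; ring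
  have e5 : Complex.exp ((x - a + t) * I)
      = Complex.exp (x * I) * Complex.exp (-(a * I)) * Complex.exp (t * I) := by
    rw [← Complex.exp_add, ← Complex.exp_add]; congr 1; ring
  rw [e2, e3, e4, e5, Complex.exp_pi_mul_I, Complex.sin, Complex.sin]
  simp only [neg_mul, Complex.exp_neg]
  have hA := Complex.exp_ne_zero (a * I)
  have hT := Complex.exp_ne_zero (t * I)
  field_simp
  ring_nf
  simp only [Complex.I_sq]
  ring

/-- A zig-zag chain of four equal-length segments `b₁b₃, b₃a₆, a₆a₈, a₈b₁'`
(the unfolding of a quadrilateral's diagonal for the orbit `01203213`),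
with interior angles `2α` at `b₃` and `a₈` and `2θ` at `a₆`, turning
consistently.  The points are modelled as complex numbers and `φ` is the
direction of the first segment. -/
def OrbitAChain (b₁ b₃ a₆ a₈ b₁' : ℂ) (r α θ φ : ℝ) : Prop :=
  b₃ - b₁ = r * Complex.exp (φ * Complex.I) ∧
  a₆ - b₃ = r * Complex.exp ((φ + π - 2 * α) * Complex.I) ∧
  a₈ - a₆ = r * Complex.exp ((φ + 2 * θ - 2 * α) * Complex.I) ∧
  b₁' - a₈ = r * Complex.exp ((φ + 2 * θ - π) * Complex.I)

set_option maxHeartbeats 1000000 in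
theorem stmt4 (b₁ b₃ a₆ a₈ b₁' : ℂ) (r α θ φ : ℝ) (hr : 0 < r)
    (hchain : OrbitAChain b₁ b₃ a₆ a₈ b₁' r α θ φ)
    (hb₁ : b₁ = 0) (him : b₁'.im = 0) (hre : 0 < b₁'.re)
    (hα : π / 4 < α ∧ α < π / 2) (hθ : π / 4 < θ ∧ θ < π / 2) :
    (a₆.im > b₁.im ∧ a₈.im > b₃.im ∧ a₆.im > b₃.im ∧ a₈.im > b₁.im) ∧
    (b₃ - b₁ = r * Complex.exp ((α - θ) * Complex.I) ∧
     a₆ - b₃ = r * Complex.exp ((π - α - θ) * Complex.I) ∧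
     a₈ - a₆ = r * Complex.exp ((θ - α) * Complex.I) ∧
     b₁' - a₈ = r * Complex.exp ((α + θ - π) * Complex.I)) := by
  obtain ⟨h1, h2, h3, h4⟩ := hchain
  obtain ⟨hα1, hα2⟩ := hα
  obtain ⟨hθ1, hθ2⟩ := hθ
  have hπ := Real.pi_pos
  set ψ : ℝ := φ - α + θ with hψ
  have hsa : 0 < Real.sin α := Real.sin_pos_of_pos_of_lt_pi (by linarith) (by linarith)
  have hst : 0 < Real.sin θ := Real.sin_pos_of_pos_of_lt_pi (by linarith) (by linarith)
  have hca : 0 < Real.cos α := Real.cos_pos_of_mem_Ioo ⟨by linarith, hα2⟩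
  have hct : 0 < Real.cos θ := Real.cos_pos_of_mem_Ioo ⟨by linarith, hθ2⟩
  have hc : 0 < 4 * r * Real.sin α * Real.sin θ := by positivity
  have hb' : b₁' = ((4 * r * Real.sin α * Real.sin θ : ℝ) : ℂ) * Complex.exp ((ψ : ℝ) * I) := by
    have hs : b₁' = b₁ + (b₃ - b₁) + (a₆ - b₃) + (a₈ - a₆) + (b₁' - a₈) := by ring
    rw [hs, h1, h2, h3, h4, hb₁]
    have hk := key_exp (φ : ℂ) (α : ℂ) (θ : ℂ)
    have harg : ((ψ : ℝ) : ℂ) = (φ : ℂ) - α + θ := by rw [hψ]; push_cast; ring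
    rw [harg]
    rw [show (0 : ℂ) + ↑r * Complex.exp (↑φ * I) + ↑r * Complex.exp ((↑φ + ↑π - 2 * ↑α) * I) +
        ↑r * Complex.exp ((↑φ + 2 * ↑θ - 2 * ↑α) * I) + ↑r * Complex.exp ((↑φ + 2 * ↑θ - ↑π) * I)
        = ↑r * (Complex.exp (↑φ * I) + Complex.exp ((↑φ + ↑π - 2 * ↑α) * I) +
          Complex.exp ((↑φ + 2 * ↑θ - 2 * ↑α) * I) + Complex.exp ((↑φ + 2 * ↑θ - ↑π) * I)) by ring,
      hk, ← Complex.ofReal_sin, ← Complex.ofReal_sin]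
    push_cast
    ring
  have hbim : b₁'.im = (4 * r * Real.sin α * Real.sin θ) * Real.sin ψ := by
    rw [hb', Complex.mul_im, Complex.ofReal_re, Complex.ofReal_im,
      Complex.exp_ofReal_mul_I_im, Complex.exp_ofReal_mul_I_re, zero_mul, add_zero]
  have hbre : b₁'.re = (4 * r * Real.sin α * Real.sin θ) * Real.cos ψ := by
    rw [hb', Complex.mul_re, Complex.ofReal_re, Complex.ofReal_im,
      Complex.exp_ofReal_mul_I_im, Complex.exp_ofReal_mul_I_re, zero_mul, sub_zero]
  have him' : Real.sin ψ = 0 := by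
    rw [him] at hbim
    rcases mul_eq_zero.mp hbim.symm with h | h
    · exact absurd h (ne_of_gt hc)
    · exact h
  have hre' : 0 < Real.cos ψ := by
    rw [hbre] at hre
    nlinarith [hc]
  have hcos1 : Real.cos ψ = 1 := by
    nlinarith [Real.sin_sq_add_cos_sq ψ]
  have hexp1 : Complex.exp ((ψ : ℝ) * I) = 1 := by
    rw [Complex.exp_mul_I, ← Complex.ofReal_cos, ← Complex.ofReal_sin, hcos1, him']
    simp
  have key2 : ∀ z w : ℂ, z = w + (ψ : ℝ) → Complex.exp (z * I) = Complex.exp (w * I) := by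
    intro z w hzw
    rw [hzw, add_mul, Complex.exp_add, hexp1, mul_one]
  have g1 : b₃ - b₁ = ↑r * Complex.exp (((α : ℂ) - θ) * I) := by
    rw [h1, key2 (φ : ℂ) ((α : ℂ) - θ) (by rw [hψ]; push_cast; ring)]
  have g2 : a₆ - b₃ = ↑r * Complex.exp (((π : ℂ) - α - θ) * I) := by
    rw [h2, key2 ((φ : ℂ) + π - 2 * α) ((π : ℂ) - α - θ) (by rw [hψ]; push_cast; ring)]
  have g3 : a₈ - a₆ = ↑r * Complex.exp (((θ : ℂ) - α) * I) := by
    rw [h3, key2 ((φ : ℂ) + 2 * θ - 2 * α) ((θ : ℂ) - α) (by rw [hψ]; push_cast; ring)]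
  have g4 : b₁' - a₈ = ↑r * Complex.exp (((α : ℂ) + θ - π) * I) := by
    rw [h4, key2 ((φ : ℂ) + 2 * θ - π) ((α : ℂ) + θ - π) (by rw [hψ]; push_cast; ring)]
  have im_of : ∀ (x : ℝ) (z w : ℂ), z - w = ↑r * Complex.exp ((x : ℝ) * I) →
      z.im - w.im = r * Real.sin x := by
    intro x z w h
    have := congrArg Complex.im h
    rwa [Complex.sub_im, Complex.mul_im, Complex.ofReal_re, Complex.ofReal_im,
      Complex.exp_ofReal_mul_I_im, Complex.exp_ofReal_mul_I_re, zero_mul, add_zero] at this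
  have i1 : b₃.im - b₁.im = r * Real.sin (α - θ) := by
    refine im_of (α - θ) b₃ b₁ ?_
    rw [g1]; push_cast; ring_nf
  have i2 : a₆.im - b₃.im = r * Real.sin (π - α - θ) := by
    refine im_of (π - α - θ) a₆ b₃ ?_
    rw [g2]; push_cast; ring_nf
  have i3 : a₈.im - a₆.im = r * Real.sin (θ - α) := by
    refine im_of (θ - α) a₈ a₆ ?_
    rw [g3]; push_cast; ring_nf
  have s1 : Real.sin (π - α - θ) = Real.sin α * Real.cos θ + Real.cos α * Real.sin θ := by
    rw [show π - α - θ = π - (α + θ) by ring, Real.sin_pi_sub, Real.sin_add]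
  have s3 : Real.sin (α - θ) = Real.sin α * Real.cos θ - Real.cos α * Real.sin θ :=
    Real.sin_sub α θ
  have s4 : Real.sin (θ - α) = Real.sin θ * Real.cos α - Real.cos θ * Real.sin α :=
    Real.sin_sub θ α
  have p1 : 0 < r * (Real.sin α * Real.cos θ) := by positivity
  have p2 : 0 < r * (Real.cos α * Real.sin θ) := by positivity
  refine ⟨⟨by nlinarith, by nlinarith, by nlinarith, by nlinarith⟩, g1, g2, g3, g4⟩
end

section
/- Let ε = π/56 and set x = π/2 − 2ε (so x < α < π/2 for α in the near-square range), and suppose β ≥ π/2. Define f(α, β) = cos α − cos(α + 2β) + cos(3α + 2β) − cos(3α + 4β). Then for all α ∈ (π/2 − 2ε, π/2) and β ∈ [π/2, 5π/8), f(α, β) ≤ cos(x) − cos(x + π) + cos(3x + π) − cos(3x + 2π), and this bound is strictly less than tan(π/4 − π/56)·cos(π/28). -/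
open Real

lemma big_eq' : Real.cos (π / 2 - 2 * (π / 56)) - Real.cos (π / 2 - 2 * (π / 56) + π) +
        Real.cos (3 * (π / 2 - 2 * (π / 56)) + π) -
        Real.cos (3 * (π / 2 - 2 * (π / 56)) + 2 * π)
      = 2 * Real.sin (π / 28) + 2 * Real.sin (3 * π / 28) := by
  rw [show π / 2 - 2 * (π / 56) = π / 2 - π / 28 by ring,
      Real.cos_pi_div_two_sub,
      show π / 2 - π / 28 + π = π - (-(π / 2 - π / 28)) by ring,
      Real.cos_pi_sub, Real.cos_neg,
      show (3:ℝ) * (π / 2 - π / 28) + π = (π / 2 - 3 * π / 28) + 2 * π by ring,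
      Real.cos_add_two_pi, Real.cos_pi_div_two_sub,
      show (3:ℝ) * (π / 2 - π / 28) + 2 * π = (π - (-(π / 2 - 3 * π / 28))) + 2 * π by ring,
      Real.cos_add_two_pi, Real.cos_pi_sub, Real.cos_neg, Real.cos_pi_div_two_sub]
  ring

lemma ident' (a b : ℝ) : Real.cos a - Real.cos (a + 2*b) + Real.cos (3*a + 2*b) - Real.cos (3*a + 4*b)
    = 8 * Real.sin b * Real.sin (a+b) * Real.cos (a+b) ^ 2 := by
  have h1 : Real.cos a - Real.cos (a + 2*b) = 2 * Real.sin (a+b) * Real.sin b := by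
    rw [Real.cos_sub_cos]
    rw [show (a + (a+2*b))/2 = a + b by ring, show (a - (a+2*b))/2 = -b by ring, Real.sin_neg]
    ring
  have h2 : Real.cos (3*a+2*b) - Real.cos (3*a + 4*b) = 2 * Real.sin (3*(a+b)) * Real.sin b := by
    rw [Real.cos_sub_cos]
    rw [show (3*a+2*b + (3*a+4*b))/2 = 3*(a + b) by ring,
      show (3*a+2*b - (3*a+4*b))/2 = -b by ring, Real.sin_neg]
    ring
  have h3 := Real.sin_three_mul (a+b)
  have h4 := Real.sin_sq_add_cos_sq (a+b)
  rw [show Real.cos a - Real.cos (a + 2*b) + Real.cos (3*a + 2*b) - Real.cos (3*a + 4*b)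
      = (Real.cos a - Real.cos (a + 2*b)) + (Real.cos (3*a+2*b) - Real.cos (3*a + 4*b)) by ring,
    h1, h2, h3]
  linear_combination (-8 * Real.sin b * Real.sin (a+b)) * h4

lemma sin_ub' {x : ℝ} (h0 : 0 ≤ x) (h1 : x ≤ 1) : Real.sin x ≤ x - x^3/6 + x^4*(5/96) := by
  have hb := Real.sin_bound (x := x) (by rwa [abs_of_nonneg h0])
  rw [abs_of_nonneg h0] at hb
  have := (abs_le.1 hb).2
  have h5 : x^5 ≤ x^4 := by
    have := mul_le_mul_of_nonneg_left h1 (pow_nonneg h0 4)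
    calc x^5 = x^4 * x := by ring
      _ ≤ x^4 * 1 := this
      _ = x^4 := by ring
  nlinarith [pow_nonneg h0 4]

lemma cos_lb' {x : ℝ} (h0 : 0 ≤ x) (h1 : x ≤ 1) : 1 - x^2/2 - x^4*(5/96) ≤ Real.cos x := by
  have hb := Real.cos_bound (x := x) (by rwa [abs_of_nonneg h0])
  rw [abs_of_nonneg h0] at hb
  have := (abs_le.1 hb).1
  linarith

set_option maxHeartbeats 4000000 in
theorem stmt10 (α β : ℝ)
    (hα : π / 2 - 2 * (π / 56) < α ∧ α < π / 2)
    (hβ : π / 2 ≤ β ∧ β < 5 * π / 8) :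
    (Real.cos α - Real.cos (α + 2 * β) + Real.cos (3 * α + 2 * β) -
        Real.cos (3 * α + 4 * β)) ≤
      (Real.cos (π / 2 - 2 * (π / 56)) - Real.cos (π / 2 - 2 * (π / 56) + π) +
        Real.cos (3 * (π / 2 - 2 * (π / 56)) + π) -
        Real.cos (3 * (π / 2 - 2 * (π / 56)) + 2 * π)) ∧
    (Real.cos (π / 2 - 2 * (π / 56)) - Real.cos (π / 2 - 2 * (π / 56) + π) +
        Real.cos (3 * (π / 2 - 2 * (π / 56)) + π) -
        Real.cos (3 * (π / 2 - 2 * (π / 56)) + 2 * π)) <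
      Real.tan (π / 4 - π / 56) * Real.cos (π / 28) := by
  have hπl : (3.141592 : ℝ) < π := Real.pi_gt_d6
  have hπu : π < (3.141593 : ℝ) := Real.pi_lt_d6
  have hπ0 : (0:ℝ) < π := Real.pi_pos
  have hs₀pos : 0 < Real.sin (π/28) :=
    Real.sin_pos_of_pos_of_lt_pi (by linarith) (by linarith)
  have hs₀le : Real.sin (π/28) ≤ 1/7 := by
    have := Real.sin_lt (x := π/28) (by linarith)
    have h4 := Real.pi_le_four
    linarith
  constructor
  · -- first inequality
    rw [ident' α β, big_eq',
      show (3:ℝ) * π / 28 = 3 * (π/28) by ring, Real.sin_three_mul]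
    have hβ0 : 0 ≤ Real.sin β :=
      Real.sin_nonneg_of_nonneg_of_le_pi (by linarith [hβ.1]) (by linarith [hβ.2])
    have hβ1 : Real.sin β ≤ 1 := Real.sin_le_one β
    have hu_le : Real.sin (α + β) ≤ Real.sin (π/28) := by
      have e1 : Real.sin (α + β) = Real.cos (α + β - π/2) := (Real.cos_sub_pi_div_two _).symm
      have e2 : Real.sin (π/28) = Real.cos (π/2 - π/28) := (Real.cos_pi_div_two_sub _).symm
      rw [e1, e2]
      apply Real.cos_le_cos_of_nonneg_of_le_pi
      · linarith
      · linarith [hα.2, hβ.2]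
      · linarith [hα.1, hβ.1]
    have hcu := Real.sin_sq_add_cos_sq (α + β)
    have hc2 : Real.cos (α+β)^2 = 1 - Real.sin (α+β)^2 := by linarith
    rw [hc2]
    have hsu1 : Real.sin (α+β) ≤ 1 := Real.sin_le_one _
    have hsum1 : -1 ≤ Real.sin (α+β) := Real.neg_one_le_sin _
    rcases le_or_gt (Real.sin (α + β)) 0 with hsu | hsu
    · have h1 : Real.sin (α+β) * (1 - Real.sin (α+β)^2) ≤ 0 :=
        mul_nonpos_of_nonpos_of_nonneg hsu (by nlinarith)
      have h2 : Real.sin β * (Real.sin (α+β) * (1 - Real.sin (α+β)^2)) ≤ 0 :=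
        mul_nonpos_of_nonneg_of_nonpos hβ0 h1
      nlinarith [mul_pos hs₀pos hs₀pos, mul_pos (mul_pos hs₀pos hs₀pos) hs₀pos]
    · have key : Real.sin (α+β) * (1 - Real.sin (α+β)^2) ≤
          Real.sin (π/28) * (1 - Real.sin (π/28)^2) := by
        nlinarith [mul_nonneg (sub_nonneg.2 hu_le)
          (by nlinarith : (0:ℝ) ≤ 1 - Real.sin (π/28)^2 - Real.sin (π/28) * Real.sin (α+β)
            - Real.sin (α+β)^2)]
      have hpos : 0 ≤ Real.sin (α+β) * (1 - Real.sin (α+β)^2) := by nlinarith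
      nlinarith [mul_le_mul_of_nonneg_right hβ1 hpos, key]
  · -- second (numeric) inequality
    rw [big_eq']
    have hx1l : (0.0560998 : ℝ) ≤ π/56 := by linarith
    have hx1u : π/56 ≤ (0.0561 : ℝ) := by linarith
    have hx2l : (0.1121997 : ℝ) ≤ π/28 := by linarith
    have hx2u : π/28 ≤ (0.1122 : ℝ) := by linarith
    have hx6l : (0.3365991 : ℝ) ≤ 3*π/28 := by linarith
    have hx6u : 3*π/28 ≤ (0.3365993 : ℝ) := by linarith
    have hs_nonneg : 0 ≤ Real.sin (π/56) :=
      Real.sin_nonneg_of_nonneg_of_le_pi (by linarith) (by linarith)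
    have hs_ub : Real.sin (π/56) ≤ 0.05610 := by
      have := Real.sin_lt (x := π/56) (by linarith)
      linarith
    have hc_lb : (0.99842 : ℝ) ≤ Real.cos (π/56) := by
      have h := cos_lb' (x := π/56) (by linarith) (by linarith)
      have h2 : (π/56)^2 ≤ (0.0561:ℝ)^2 := pow_le_pow_left₀ (by linarith) hx1u 2
      have h4 : (π/56)^4 ≤ (0.0561:ℝ)^4 := pow_le_pow_left₀ (by linarith) hx1u 4
      nlinarith
    have hc_ub : Real.cos (π/56) ≤ 1 := Real.cos_le_one _
    have hS2_ub : Real.sin (π/28) ≤ 0.112 := by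
      have h := sin_ub' (x := π/28) (by linarith) (by linarith)
      have h3 : (0.1121997:ℝ)^3 ≤ (π/28)^3 := pow_le_pow_left₀ (by norm_num) hx2l 3
      have h4 : (π/28)^4 ≤ (0.1122:ℝ)^4 := pow_le_pow_left₀ (by linarith) hx2u 4
      nlinarith
    have hS6_ub : Real.sin (3*π/28) ≤ 0.331 := by
      have h := sin_ub' (x := 3*π/28) (by linarith) (by linarith)
      have h3 : (0.3365991:ℝ)^3 ≤ (3*π/28)^3 := pow_le_pow_left₀ (by norm_num) hx6l 3
      have h4 : (3*π/28)^4 ≤ (0.3365993:ℝ)^4 := pow_le_pow_left₀ (by linarith) hx6u 4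
      nlinarith
    have hS6_pos : 0 < Real.sin (3*π/28) :=
      Real.sin_pos_of_pos_of_lt_pi (by linarith) (by linarith)
    have hC2_lb : (0.9936 : ℝ) ≤ Real.cos (π/28) := by
      have h := cos_lb' (x := π/28) (by linarith) (by linarith)
      have h2 : (π/28)^2 ≤ (0.1122:ℝ)^2 := pow_le_pow_left₀ (by linarith) hx2u 2
      have h4 : (π/28)^4 ≤ (0.1122:ℝ)^4 := pow_le_pow_left₀ (by linarith) hx2u 4
      nlinarith
    have hC2_ub : Real.cos (π/28) ≤ 1 := Real.cos_le_one _
    have hcs : 0 < Real.cos (π/56) + Real.sin (π/56) := by linarith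
    have htan : Real.tan (π / 4 - π / 56)
        = (Real.cos (π/56) - Real.sin (π/56)) / (Real.cos (π/56) + Real.sin (π/56)) := by
      rw [Real.tan_eq_sin_div_cos, Real.sin_sub, Real.cos_sub,
        Real.sin_pi_div_four, Real.cos_pi_div_four]
      rw [div_eq_div_iff (by positivity) hcs.ne']
      ring
    rw [htan, div_mul_eq_mul_div, lt_div_iff₀ hcs]
    have hL : (2 * Real.sin (π/28) + 2 * Real.sin (3*π/28)) * (Real.cos (π/56) + Real.sin (π/56))
        ≤ 0.886 * 1.0561 := by
      apply mul_le_mul (by linarith) (by linarith) (by linarith) (by norm_num)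
    have hR : (0.94232 : ℝ) * 0.9936
        ≤ (Real.cos (π/56) - Real.sin (π/56)) * Real.cos (π/28) := by
      apply mul_le_mul (by linarith) (by linarith) (by norm_num) (by linarith)
    nlinarith [hL, hR]
end

section
/- For every integer n ≥ 2, the word Wₙ = 0(13)ⁿ0(13)^{n−1}131(31)^{n−1}0(31)ⁿ03 over the alphabet {0,1,3} satisfies: for each letter in {0,1,3}, the number of occurrences in odd positions equals the number of occurrences in even positions. (Positions are indexed starting from 1; (13)ⁿ denotes n-fold concatenation of the block 13.) -/
/-- Number of occurrences of the letter `l` in odd positions (1-indexed)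
of the word `w`, i.e. at even 0-based indices. -/
def countOddPos (w : List ℕ) (l : ℕ) : ℕ :=
  ((w.zipIdx.map Prod.swap).filter (fun p => p.1 % 2 = 0 ∧ p.2 = l)).length

/-- Number of occurrences of the letter `l` in even positions (1-indexed)
of the word `w`, i.e. at odd 0-based indices. -/
def countEvenPos (w : List ℕ) (l : ℕ) : ℕ :=
  ((w.zipIdx.map Prod.swap).filter (fun p => p.1 % 2 = 1 ∧ p.2 = l)).length

/-- The orbit type `Wₙ = 0(13)ⁿ0(13)^{n-1}131(31)^{n-1}0(31)ⁿ03` of the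
`Xₙ` family of periodic billiard paths. -/
def Xword (n : ℕ) : List ℕ :=
  [0] ++ (List.replicate n [1, 3]).flatten ++ [0] ++
    (List.replicate (n - 1) [1, 3]).flatten ++ [1, 3, 1] ++
    (List.replicate (n - 1) [3, 1]).flatten ++ [0] ++
    (List.replicate n [3, 1]).flatten ++ [0, 3]

def bal : List ℕ → ℕ → ℕ → ℤ
  | [], _, _ => 0
  | a :: t, k, l => (if a = l then (-1:ℤ)^k else 0) + bal t (k+1) l

lemma bal_append (a b : List ℕ) (k l : ℕ) :
    bal (a ++ b) k l = bal a k l + bal b (k + a.length) l := by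
  induction a generalizing k with
  | nil => simp [bal]
  | cons x t ih =>
    simp only [List.cons_append, bal, List.append_eq, ih, List.length_cons]
    have : k + 1 + t.length = k + (t.length + 1) := by omega
    rw [this]; ring

lemma bal_per (w : List ℕ) (k l : ℕ) : bal w (k + 2) l = bal w k l := by
  induction w generalizing k with
  | nil => simp [bal]
  | cons x t ih =>
    simp only [bal]
    have : k + 2 + 1 = k + 1 + 2 := by omega
    rw [this, ih, pow_add]
    norm_num

lemma bal_rep (x y : ℕ) (m k l : ℕ) :
    bal ((List.replicate m [x, y]).flatten) k l = m * bal [x, y] k l := by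
  induction m with
  | zero => simp [bal]
  | succ p ih =>
    rw [List.replicate_succ, List.flatten_cons, bal_append,
      show k + [x, y].length = k + 2 from rfl, bal_per, ih]
    push_cast; ring

lemma negpow (k : ℕ) : (-1:ℤ)^k = if k % 2 = 0 then 1 else -1 := by
  rcases Nat.even_or_odd k with h | h
  · simp [h.neg_one_pow, Nat.even_iff.mp h]
  · simp [h.neg_one_pow, Nat.odd_iff.mp h]

lemma cnt_eq (w : List ℕ) (k l : ℕ) :
    ((((w.zipIdx k).map Prod.swap).filter (fun p => p.1 % 2 = 0 ∧ p.2 = l)).length : ℤ) -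
      (((w.zipIdx k).map Prod.swap).filter (fun p => p.1 % 2 = 1 ∧ p.2 = l)).length = bal w k l := by
  induction w generalizing k with
  | nil => simp [bal]
  | cons x t ih =>
    simp only [List.zipIdx_cons, List.map_cons, Prod.swap_prod_mk, List.filter_cons, bal]
    rcases Nat.even_or_odd k with he | ho
    · have h2 : k % 2 = 0 := Nat.even_iff.mp he
      have h2' : ¬ (k % 2 = 1) := by omega
      by_cases hx : x = l
      · simp [h2, h2', hx, he.neg_one_pow, ← ih]
        push_cast; ring
      · simp [h2, h2', hx, ← ih]
    · have h2 : k % 2 = 1 := Nat.odd_iff.mp ho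
      have h2' : ¬ (k % 2 = 0) := by omega
      by_cases hx : x = l
      · simp [h2, h2', hx, ho.neg_one_pow, ← ih]
        push_cast; ring
      · simp [h2, h2', hx, ← ih]

theorem stmt12 (n : ℕ) (hn : 2 ≤ n) (l : ℕ) :
    countOddPos (Xword n) l = countEvenPos (Xword n) l := by
  have h := cnt_eq (Xword n) 0 l
  have hb : bal (Xword n) 0 l = 0 := by
    unfold Xword
    simp only [bal_append, bal_rep, List.length_flatten, List.map_replicate,
      List.sum_replicate, smul_eq_mul, List.length_cons, List.length_nil,
      List.length_append, List.append_eq, bal]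
    obtain ⟨m, rfl⟩ : ∃ m, n = m + 1 := ⟨n - 1, by omega⟩
    simp only [Nat.add_sub_cancel, negpow]
    norm_num [Nat.add_mod, Nat.mul_mod, Nat.mod_self]
    by_cases h0 : 0 = l
    · subst h0; norm_num
    · by_cases h1 : 1 = l
      · subst h1; norm_num; ring
      · by_cases h3 : 3 = l
        · subst h3; norm_num
        · simp [h0, h1, h3]
  rw [hb] at h
  unfold countOddPos countEvenPos
  omega
end

section
/- Let ABC be an acute triangle and let X, Y, Z be the feet of the altitudes from A, B, C respectively (X on BC, Y on CA, Z on AB). Then the closed polygonal path X → Y → Z → X satisfies the billiard reflection law at each of X, Y, Z; that is, the angle between XY and line BC equals the angle between XZ and line BC, and similarly at Y and Z. -/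
open Real EuclideanGeometry
open scoped RealInnerProductSpace


private lemma inner_pos_of_angle_lt_pi_div_two {x y : EuclideanSpace ℝ (Fin 2)}
    (hx : x ≠ 0) (hy : y ≠ 0)
    (h : InnerProductGeometry.angle x y < π / 2) : 0 < ⟪x, y⟫ := by
  have hc : 0 < Real.cos (InnerProductGeometry.angle x y) :=
    Real.cos_pos_of_mem_Ioo ⟨by nlinarith [Real.pi_pos, InnerProductGeometry.angle_nonneg x y], h⟩
  rw [InnerProductGeometry.cos_angle] at hc
  have hd : 0 < ‖x‖ * ‖y‖ := mul_pos (norm_pos_iff.mpr hx) (norm_pos_iff.mpr hy)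
  rcases (div_pos_iff).mp hc with ⟨h1, _⟩ | ⟨_, h2⟩
  · exact h1
  · linarith

private lemma fagnano_aux (A B C X Y Z : EuclideanSpace ℝ (Fin 2))
    (hncol : ¬ Collinear ℝ ({A, B, C} : Set (EuclideanSpace ℝ (Fin 2))))
    (hacuteA : ∠ B A C < π / 2) (hacuteB : ∠ A B C < π / 2)
    (hacuteC : ∠ A C B < π / 2)
    (hX : X ∈ affineSpan ℝ ({B, C} : Set (EuclideanSpace ℝ (Fin 2))))
    (hXperp : ⟪A - X, C - B⟫ = (0 : ℝ))
    (hY : Y ∈ affineSpan ℝ ({C, A} : Set (EuclideanSpace ℝ (Fin 2))))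
    (hYperp : ⟪B - Y, A - C⟫ = (0 : ℝ))
    (hZ : Z ∈ affineSpan ℝ ({A, B} : Set (EuclideanSpace ℝ (Fin 2))))
    (hZperp : ⟪C - Z, B - A⟫ = (0 : ℝ)) :
    ∠ Y X B = ∠ Z X C := by
  -- distinctness
  have hAB : A ≠ B := by rintro rfl; exact hncol (by simpa using collinear_pair ℝ A C)
  have hBC : B ≠ C := by
    rintro rfl; exact hncol (by simpa [Set.insert_comm] using collinear_pair ℝ A B)
  have hAC : A ≠ C := by
    rintro rfl; exact hncol (by simpa [Set.insert_comm, Set.pair_comm] using collinear_pair ℝ A B)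
  -- vectors
  set u : EuclideanSpace ℝ (Fin 2) := A - C with hu_def
  set v : EuclideanSpace ℝ (Fin 2) := B - C with hv_def
  have hu : u ≠ 0 := sub_ne_zero.mpr hAC
  have hv : v ≠ 0 := sub_ne_zero.mpr hBC
  have huv : u - v ≠ 0 := by
    have : u - v = A - B := by rw [hu_def, hv_def]; module
    rw [this]; exact sub_ne_zero.mpr hAB
  have hpa : (0:ℝ) < ‖v‖ := norm_pos_iff.mpr hv
  have hpb : (0:ℝ) < ‖u‖ := norm_pos_iff.mpr hu
  have hpc : (0:ℝ) < ‖u - v‖ := norm_pos_iff.mpr huv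
  have hBA : B - A = v - u := by rw [hu_def, hv_def]; module
  have hAB' : A - B = u - v := by rw [hu_def, hv_def]; module
  have hCB : C - B = -v := by rw [hv_def]; module
  have hCA : C - A = -u := by rw [hu_def]; module
  -- acuteness gives positive inner products
  have hp : (0:ℝ) < ⟪u, v⟫ := by
    have := inner_pos_of_angle_lt_pi_div_two hu hv (by exact hacuteC)
    exact this
  have hq' : ⟪u, v⟫ < ‖v‖^2 := by
    have h0 : (0:ℝ) < ⟪A - B, C - B⟫ :=
      inner_pos_of_angle_lt_pi_div_two (by rw [hAB']; exact huv)
        (by rw [hCB]; exact neg_ne_zero.mpr hv) (by exact hacuteB)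
    rw [hAB', hCB] at h0
    simp only [inner_neg_right, inner_sub_left] at h0
    rw [real_inner_self_eq_norm_sq] at h0
    have hvu : ⟪v, u⟫ = ⟪u, v⟫ := real_inner_comm u v
    linarith [h0]
  have hm' : ⟪u, v⟫ < ‖u‖^2 := by
    have h0 : (0:ℝ) < ⟪B - A, C - A⟫ :=
      inner_pos_of_angle_lt_pi_div_two (by rw [hBA]; exact sub_ne_zero.mpr (by
        intro h; exact huv (by rw [sub_eq_zero]; exact h.symm)))
        (by rw [hCA]; exact neg_ne_zero.mpr hu) (by exact hacuteA)
    rw [hBA, hCA] at h0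
    simp only [inner_neg_right, inner_sub_left] at h0
    rw [real_inner_self_eq_norm_sq] at h0
    have hvu : ⟪v, u⟫ = ⟪u, v⟫ := real_inner_comm u v
    linarith [h0]
  have hgamma : ‖u - v‖^2 = ‖v‖^2 + ‖u‖^2 - 2*⟪u, v⟫ := by
    rw [norm_sub_sq_real]; ring
  -- coefficients
  rw [← vsub_vadd X B] at hX
  obtain ⟨t, ht⟩ := vadd_left_mem_affineSpan_pair.mp hX
  simp only [vsub_eq_sub] at ht
  have hXeq : X = t • (C - B) + B := sub_eq_iff_eq_add.mp ht.symm
  rw [← vsub_vadd Y C] at hY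
  obtain ⟨r, hr⟩ := vadd_left_mem_affineSpan_pair.mp hY
  simp only [vsub_eq_sub] at hr
  have hYeq : Y = r • (A - C) + C := sub_eq_iff_eq_add.mp hr.symm
  rw [← vsub_vadd Z A] at hZ
  obtain ⟨w, hw⟩ := vadd_left_mem_affineSpan_pair.mp hZ
  simp only [vsub_eq_sub] at hw
  have hZeq : Z = w • (B - A) + A := sub_eq_iff_eq_add.mp hw.symm
  -- perpendicularity relations
  have hAX : A - X = u - ((1:ℝ) - t) • v := by rw [hXeq, hu_def, hv_def]; module
  have ht1 : ((1:ℝ) - t) * ‖v‖^2 = ⟪u, v⟫ := by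
    rw [hAX, hCB] at hXperp
    simp only [inner_neg_right, inner_sub_left, real_inner_smul_left] at hXperp
    rw [real_inner_self_eq_norm_sq] at hXperp
    linarith [hXperp]
  have hBY : B - Y = v - r • u := by rw [hYeq, hu_def, hv_def]; module
  have hr1 : r * ‖u‖^2 = ⟪u, v⟫ := by
    rw [hBY] at hYperp
    simp only [inner_sub_left, real_inner_smul_left] at hYperp
    rw [real_inner_self_eq_norm_sq, real_inner_comm u v] at hYperp
    linarith [hYperp]
  have hCZ : C - Z = -u - w • (v - u) := by rw [hZeq, hu_def, hv_def]; module
  have hw1 : w * ‖u - v‖^2 = ‖u‖^2 - ⟪u, v⟫ := by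
    rw [hCZ, hBA] at hZperp
    simp only [inner_sub_left, inner_sub_right, inner_neg_left, real_inner_smul_left] at hZperp
    rw [real_inner_self_eq_norm_sq, real_inner_self_eq_norm_sq, real_inner_comm u v] at hZperp
    linear_combination w * hgamma - hZperp
  -- positivity of coefficients
  have ht2 : t * ‖v‖^2 = ‖v‖^2 - ⟪u, v⟫ := by linarith [ht1]
  have hva : (0:ℝ) < ‖v‖^2 := by positivity
  have hub : (0:ℝ) < ‖u‖^2 := by positivity
  have huvc : (0:ℝ) < ‖u - v‖^2 := by positivity
  have ht_pos : 0 < t := by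
    have h0 : 0 < t * ‖v‖^2 := by rw [ht2]; linarith
    have h1 := div_pos h0 hva
    rwa [mul_div_cancel_right₀ _ (ne_of_gt hva)] at h1
  have ht_lt : t < 1 := by
    have h0 : 0 < (1 - t) * ‖v‖^2 := by rw [ht1]; linarith
    have h1 := div_pos h0 hva
    rw [mul_div_cancel_right₀ _ (ne_of_gt hva)] at h1
    linarith
  have hr_lt : r < 1 := by
    have h0 : 0 < (1 - r) * ‖u‖^2 := by
      have : (1 - r) * ‖u‖^2 = ‖u‖^2 - ⟪u, v⟫ := by linear_combination -hr1
      rw [this]; linarith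
    have h1 := div_pos h0 hub
    rw [mul_div_cancel_right₀ _ (ne_of_gt hub)] at h1
    linarith
  have hw_pos : 0 < w := by
    have h0 : 0 < w * ‖u - v‖^2 := by rw [hw1]; linarith
    have h1 := div_pos h0 huvc
    rwa [mul_div_cancel_right₀ _ (ne_of_gt huvc)] at h1
  -- key vectors
  have hYX : Y - X = r • u - ((1:ℝ) - t) • v := by rw [hXeq, hYeq, hu_def, hv_def]; module
  have hBX : B - X = t • v := by rw [hXeq, hv_def]; module
  have hZX : Z - X = ((1:ℝ) - w) • (u - v) + t • v := by rw [hXeq, hZeq, hu_def, hv_def]; module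
  have hCX : C - X = (t - 1) • v := by rw [hXeq, hv_def]; module
  -- norms
  have hnBX : ‖B - X‖ = t * ‖v‖ := by rw [hBX, norm_smul, Real.norm_eq_abs, abs_of_pos ht_pos]
  have hnCX : ‖C - X‖ = (1 - t) * ‖v‖ := by
    rw [hCX, norm_smul, Real.norm_eq_abs, abs_of_neg (by linarith : t - 1 < 0)]; ring
  have hnY2 : ‖Y - X‖^2 * (‖v‖^2 * ‖u‖^2) = ⟪u, v⟫^2 * ‖u - v‖^2 := by
    rw [← real_inner_self_eq_norm_sq, hYX]
    simp only [inner_sub_left, inner_sub_right, real_inner_smul_left, real_inner_smul_right]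
    rw [real_inner_comm u v, real_inner_self_eq_norm_sq, real_inner_self_eq_norm_sq]
    linear_combination (‖v‖^2*(r*‖u‖^2+⟪u,v⟫) - 2*⟪u,v⟫*(1-t)*‖v‖^2) * hr1 +
      (‖u‖^2*((1-t)*‖v‖^2+⟪u,v⟫) - 2*⟪u,v⟫^2) * ht1 + (-⟪u,v⟫^2) * hgamma
  have hnZ2 : ‖Z - X‖^2 * (‖v‖^2 * ‖u - v‖^2) = (‖v‖^2 - ⟪u, v⟫)^2 * ‖u‖^2 := by
    rw [← real_inner_self_eq_norm_sq, hZX]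
    simp only [inner_add_left, inner_add_right, inner_sub_left, inner_sub_right,
      real_inner_smul_left, real_inner_smul_right]
    rw [real_inner_comm u v, real_inner_self_eq_norm_sq, real_inner_self_eq_norm_sq]
    have hw' : ((1:ℝ) - w) * ‖u - v‖^2 = ‖v‖^2 - ⟪u, v⟫ := by
      linear_combination hgamma - hw1
    linear_combination ((-2*(‖v‖^2-⟪u,v⟫)*t*‖v‖^2) + ((1-w)*‖u-v‖^2 + (‖v‖^2-⟪u,v⟫))*‖v‖^2) * hw' +
      ((t*‖v‖^2 + (‖v‖^2-⟪u,v⟫))*‖u-v‖^2 - 2*(‖v‖^2-⟪u,v⟫)^2) * ht2 +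
      (-((1-w)^2*‖v‖^2*‖u-v‖^2) + (‖v‖^2-⟪u,v⟫)^2) * hgamma
  have hnYpos : (0:ℝ) < ‖Y - X‖ := by
    refine norm_pos_iff.mpr ?_
    intro h
    rw [h, norm_zero] at hnY2
    have h0 : (0:ℝ) < ⟪u, v⟫^2 * ‖u - v‖^2 := mul_pos (pow_pos hp 2) huvc
    simp only [ne_eq, OfNat.ofNat_ne_zero, not_false_eq_true, zero_pow, zero_mul] at hnY2
    linarith
  have hnZpos : (0:ℝ) < ‖Z - X‖ := by
    refine norm_pos_iff.mpr ?_
    intro h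
    rw [h, norm_zero] at hnZ2
    have h0 : (0:ℝ) < (‖v‖^2 - ⟪u, v⟫)^2 * ‖u‖^2 :=
      mul_pos (pow_pos (by linarith) 2) hub
    simp only [ne_eq, OfNat.ofNat_ne_zero, not_false_eq_true, zero_pow, zero_mul] at hnZ2
    linarith
  -- the key equation
  have hK : ⟪u, v⟫ * ‖u - v‖^2 * ‖Z - X‖ = (‖v‖^2 - ⟪u, v⟫) * ‖u‖^2 * ‖Y - X‖ := by
    have h2 : (⟪u, v⟫ * ‖u - v‖^2 * ‖Z - X‖)^2 * ‖v‖^2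
        = ((‖v‖^2 - ⟪u, v⟫) * ‖u‖^2 * ‖Y - X‖)^2 * ‖v‖^2 := by
      linear_combination (⟪u,v⟫^2*‖u-v‖^2) * hnZ2 - ((‖v‖^2-⟪u,v⟫)^2*‖u‖^2) * hnY2
    have h3 : (⟪u, v⟫ * ‖u - v‖^2 * ‖Z - X‖)^2
        = ((‖v‖^2 - ⟪u, v⟫) * ‖u‖^2 * ‖Y - X‖)^2 :=
      mul_right_cancel₀ (ne_of_gt hva) h2
    have hA : (0:ℝ) ≤ ⟪u, v⟫ * ‖u - v‖^2 * ‖Z - X‖ :=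
      mul_nonneg (mul_nonneg hp.le (by positivity)) (norm_nonneg _)
    have hB : (0:ℝ) ≤ (‖v‖^2 - ⟪u, v⟫) * ‖u‖^2 * ‖Y - X‖ :=
      mul_nonneg (mul_nonneg (by linarith) (by positivity)) (norm_nonneg _)
    exact (sq_eq_sq₀ hA hB).mp h3
  -- inner products for the two angles
  have hIY : ⟪Y - X, B - X⟫ = -(t * ⟪u, v⟫ * (1 - r)) := by
    rw [hYX, hBX]
    simp only [inner_sub_left, real_inner_smul_left, real_inner_smul_right]
    rw [real_inner_self_eq_norm_sq]
    linear_combination (-t) * ht1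
  have hIZ : ⟪Z - X, C - X⟫ = -((1 - t) * (‖v‖^2 - ⟪u, v⟫) * w) := by
    rw [hZX, hCX]
    simp only [inner_add_left, inner_sub_left, real_inner_smul_left, real_inner_smul_right]
    rw [real_inner_self_eq_norm_sq]
    linear_combination (1 - t) * ht1
  -- conclude
  show Real.arccos (⟪Y - X, B - X⟫ / (‖Y - X‖ * ‖B - X‖))
      = Real.arccos (⟪Z - X, C - X⟫ / (‖Z - X‖ * ‖C - X‖))
  congr 1
  rw [hIY, hIZ, hnBX, hnCX,
    div_eq_div_iff (mul_pos hnYpos (mul_pos ht_pos hpa)).ne' (mul_pos hnZpos (mul_pos (by linarith : (0:ℝ) < 1 - t) hpa)).ne']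
  apply mul_right_cancel₀ (show (‖u‖^2*‖u-v‖^2 : ℝ) ≠ 0 by positivity)
  linear_combination ((t*(1-t)*‖v‖)*⟪u,v⟫*‖Z-X‖*‖u-v‖^2) * hr1 +
    ((t*(1-t)*‖v‖)*(‖v‖^2-⟪u,v⟫)*‖Y-X‖*‖u‖^2) * hw1 +
    (-(t*(1-t)*‖v‖)*(‖u‖^2-⟪u,v⟫)) * hK


theorem stmt14 (A B C X Y Z : EuclideanSpace ℝ (Fin 2))
    (hncol : ¬ Collinear ℝ ({A, B, C} : Set (EuclideanSpace ℝ (Fin 2))))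
    (hacuteA : ∠ B A C < π / 2) (hacuteB : ∠ A B C < π / 2)
    (hacuteC : ∠ A C B < π / 2)
    -- `X` is the foot of the altitude from `A` on `BC`
    (hX : X ∈ affineSpan ℝ ({B, C} : Set (EuclideanSpace ℝ (Fin 2))))
    (hXperp : ⟪A - X, C - B⟫ = (0 : ℝ))
    -- `Y` is the foot of the altitude from `B` on `CA`
    (hY : Y ∈ affineSpan ℝ ({C, A} : Set (EuclideanSpace ℝ (Fin 2))))
    (hYperp : ⟪B - Y, A - C⟫ = (0 : ℝ))
    -- `Z` is the foot of the altitude from `C` on `AB`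
    (hZ : Z ∈ affineSpan ℝ ({A, B} : Set (EuclideanSpace ℝ (Fin 2))))
    (hZperp : ⟪C - Z, B - A⟫ = (0 : ℝ)) :
    ∠ Y X B = ∠ Z X C ∧ ∠ Z Y C = ∠ X Y A ∧ ∠ X Z A = ∠ Y Z B := by
  have hs1 : ({B, C, A} : Set (EuclideanSpace ℝ (Fin 2))) = {A, B, C} := by
    ext x; simp; tauto
  have hs2 : ({C, A, B} : Set (EuclideanSpace ℝ (Fin 2))) = {A, B, C} := by
    ext x; simp; tauto
  have hncol1 : ¬ Collinear ℝ ({B, C, A} : Set (EuclideanSpace ℝ (Fin 2))) := by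
    rw [hs1]; exact hncol
  have hncol2 : ¬ Collinear ℝ ({C, A, B} : Set (EuclideanSpace ℝ (Fin 2))) := by
    rw [hs2]; exact hncol
  refine ⟨fagnano_aux A B C X Y Z hncol hacuteA hacuteB hacuteC hX hXperp hY hYperp hZ hZperp,
    fagnano_aux B C A Y Z X hncol1 (by rw [angle_comm]; exact hacuteB)
      (by rw [angle_comm]; exact hacuteC) hacuteA
      hY hYperp hZ hZperp hX hXperp,
    fagnano_aux C A B Z X Y hncol2 hacuteC
      (by rw [angle_comm]; exact hacuteA) (by rw [angle_comm]; exact hacuteB)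
      hZ hZperp hX hXperp hY hYperp⟩
end
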